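/- Let N ≥ 1, p > 1, g : ℝ → ℝ be nonnegative, nondecreasing and locally Lipschitz, and let u be a C² radial solution of -Δ_p u = g(u) on the punctured unit ball with u_r < 0 on (0,1). Then for all r ∈ (0,1], |u_rr(r)| ≤ ((2N-1)/(p-1)) |u_r(r)| / r. -/

import Mathlib

open Real Set Filter Topology

/-- For a `C²` radial solution of `-Δ_p u = g(u)` on the punctured unit ball with
`u_r < 0`, where `g ≥ 0` is nondecreasing and locally Lipschitz, one has
`|u_rr(r)| ≤ ((2N-1)/(p-1)) |u_r(r)| / r` for all `r ∈ (0,1]`. -/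
theorem second_deriv_bound
    (N p : ℝ) (hN : 1 ≤ N) (hp : 1 < p)
    (g : ℝ → ℝ) (hg0 : ∀ x, 0 ≤ g x) (hgmono : Monotone g)
    (hglip : LocallyLipschitz g)
    (u u' u'' : ℝ → ℝ)
    (hu : ∀ r ∈ Ioc (0:ℝ) 1, HasDerivAt u (u' r) r)
    (hu' : ∀ r ∈ Ioc (0:ℝ) 1, HasDerivAt u' (u'' r) r)
    (hu'neg : ∀ r ∈ Ioc (0:ℝ) 1, u' r < 0)
    (heq : ∀ r ∈ Ioc (0:ℝ) 1,
      HasDerivAt (fun s => s ^ (N - 1) * |u' s| ^ (p - 1))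
        (r ^ (N - 1) * g (u r)) r) :
    ∀ r ∈ Ioc (0:ℝ) 1, |u'' r| ≤ ((2 * N - 1) / (p - 1)) * |u' r| / r := by
  intro r hrI
  obtain ⟨hr0, hr1⟩ := hrI
  have hrI : r ∈ Ioc (0:ℝ) 1 := ⟨hr0, hr1⟩
  have hN0 : (0:ℝ) < N := lt_of_lt_of_le one_pos hN
  have hp1 : (0:ℝ) < p - 1 := sub_pos.mpr hp
  have hvr : 0 < -u' r := neg_pos.mpr (hu'neg r hrI)
  set G := g (u r) with hGdef
  have hG0 : 0 ≤ G := hg0 _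
  set A := (-u' r) ^ (p - 1 - 1) with hAdef
  have hApos : 0 < A := Real.rpow_pos_of_pos hvr _
  have hR : (0:ℝ) < r ^ (N - 1) := Real.rpow_pos_of_pos hr0 _
  -- V1 = A * V
  have hV12 : (-u' r) ^ (p - 1) = A * (-u' r) := by
    rw [hAdef, ← Real.rpow_add_one hvr.ne' (p - 1 - 1)]
    congr 1; ring
  -- Step 1: the ODE at r
  have h1 : HasDerivAt (fun s : ℝ => s ^ (N - 1)) ((N - 1) * r ^ (N - 1 - 1)) r :=
    Real.hasDerivAt_rpow_const (Or.inl hr0.ne')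
  have h2 : HasDerivAt (fun s => (-u' s) ^ (p - 1))
      ((-u'' r) * (p - 1) * (-u' r) ^ (p - 1 - 1)) r :=
    ((hu' r hrI).neg).rpow_const (Or.inl hvr.ne')
  have hφ := h1.mul h2
  have heqon : EqOn (fun s : ℝ => s ^ (N - 1) * |u' s| ^ (p - 1))
      (fun s : ℝ => s ^ (N - 1) * (-u' s) ^ (p - 1)) (Ioc 0 1) := fun s hs => by
    simp only [abs_of_neg (hu'neg s hs)]
  have hw1 := (heq r hrI).hasDerivWithinAt (s := Ioc (0:ℝ) 1)
  have hw2 := (hφ.hasDerivWithinAt (s := Ioc (0:ℝ) 1)).congr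
    (fun y hy => heqon hy) (heqon hrI)
  have hud := uniqueDiffOn_Ioc (0:ℝ) 1 r hrI
  have E : r ^ (N - 1) * G =
      (N - 1) * r ^ (N - 1 - 1) * (-u' r) ^ (p - 1)
        + r ^ (N - 1) * ((-u'' r) * (p - 1) * (-u' r) ^ (p - 1 - 1)) :=
    (hw1.derivWithin hud).symm.trans (hw2.derivWithin hud)
  have hr2 : r ^ (N - 1 - 1) = r ^ (N - 1) / r := by
    rw [Real.rpow_sub hr0, Real.rpow_one]
  have geq : G = (N - 1) / r * ((-u' r) ^ (p - 1)) - (p - 1) * A * u'' r := by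
    apply mul_left_cancel₀ hR.ne'
    rw [E, hr2, hAdef]; ring
  have geqr : G * r = (N - 1) * (A * (-u' r)) - (p - 1) * A * u'' r * r := by
    rw [geq, hV12]; field_simp
  -- Step 2: the key bound g(u r) * r ≤ N * |u'(r)|^(p-1)
  set h : ℝ → ℝ := fun s => s ^ (N - 1) * |u' s| ^ (p - 1) - G * s ^ N / N with hhdef
  have hh : ∀ x ∈ Ioc (0:ℝ) 1, HasDerivAt h (x ^ (N - 1) * (g (u x) - G)) x := by
    intro x hx
    have d2 : HasDerivAt (fun s : ℝ => G * s ^ N / N) (G * x ^ (N - 1)) x := by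
      have := ((Real.hasDerivAt_rpow_const (p := N)
        (Or.inl hx.1.ne')).const_mul G).div_const N
      exact this.congr_deriv (by field_simp)
    have := (heq x hx).sub d2
    exact this.congr_deriv (by ring)
  have hanti : ∀ x ∈ Ioc (0:ℝ) 1, x ≤ r → u r ≤ u x := by
    intro x hx hxr
    rcases eq_or_lt_of_le hxr with hcase | hcase
    · rw [hcase]
    · have hsub : Icc x r ⊆ Ioc (0:ℝ) 1 := fun y hy =>
        ⟨lt_of_lt_of_le hx.1 hy.1, hy.2.trans hr1⟩
      have hmono : AntitoneOn u (Icc x r) := by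
        apply antitoneOn_of_deriv_nonpos (convex_Icc x r)
        · exact fun y hy => (hu y (hsub hy)).continuousAt.continuousWithinAt
        · intro y hy
          rw [interior_Icc] at hy
          exact ((hu y (hsub (Ioo_subset_Icc_self hy))).differentiableAt).differentiableWithinAt
        · intro y hy
          rw [interior_Icc] at hy
          rw [(hu y (hsub (Ioo_subset_Icc_self hy))).deriv]
          exact (hu'neg y (hsub (Ioo_subset_Icc_self hy))).le
      exact hmono ⟨le_rfl, hxr⟩ ⟨hxr, le_rfl⟩ hxr
  have key2 : ∀ ε ∈ Ioo (0:ℝ) r, h ε ≤ h r := by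
    intro ε hε
    have hsub : Icc ε r ⊆ Ioc (0:ℝ) 1 := fun y hy =>
      ⟨lt_of_lt_of_le hε.1 hy.1, hy.2.trans hr1⟩
    have hmono : MonotoneOn h (Icc ε r) := by
      apply monotoneOn_of_deriv_nonneg (convex_Icc ε r)
      · exact fun y hy => (hh y (hsub hy)).continuousAt.continuousWithinAt
      · intro y hy
        rw [interior_Icc] at hy
        exact ((hh y (hsub (Ioo_subset_Icc_self hy))).differentiableAt).differentiableWithinAt
      · intro y hy
        rw [interior_Icc] at hy
        have hyI := hsub (Ioo_subset_Icc_self hy)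
        rw [(hh y hyI).deriv]
        have h1 : G ≤ g (u y) := hgmono (hanti y hyI hy.2.le)
        exact mul_nonneg (Real.rpow_nonneg hyI.1.le _) (sub_nonneg.mpr h1)
    exact hmono ⟨le_rfl, hε.2.le⟩ ⟨hε.2.le, le_rfl⟩ hε.2.le
  have key3 : ∀ ε ∈ Ioo (0:ℝ) r, -(G * ε ^ N / N) ≤ h r := by
    intro ε hε
    refine le_trans ?_ (key2 ε hε)
    have hnn : 0 ≤ ε ^ (N - 1) * |u' ε| ^ (p - 1) :=
      mul_nonneg (Real.rpow_nonneg hε.1.le _) (Real.rpow_nonneg (abs_nonneg _) _)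
    simp only [hhdef]
    linarith
  have hlim : Tendsto (fun ε : ℝ => -(G * ε ^ N / N)) (𝓝[>] (0:ℝ)) (𝓝 0) := by
    have h0 : Tendsto (fun ε : ℝ => ε ^ N) (𝓝 (0:ℝ)) (𝓝 ((0:ℝ) ^ N)) :=
      (Real.continuousAt_rpow_const 0 N (Or.inr hN0.le)).tendsto
    rw [Real.zero_rpow hN0.ne'] at h0
    have h1 := ((h0.const_mul G).div_const N).neg
    simp only [mul_zero, zero_div, neg_zero] at h1
    exact h1.mono_left nhdsWithin_le_nhds
  have hhr : 0 ≤ h r := by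
    refine le_of_tendsto hlim ?_
    filter_upwards [Ioo_mem_nhdsGT_of_mem (show (0:ℝ) ∈ Ico (0:ℝ) r from ⟨le_rfl, hr0⟩)]
      with ε hε
    exact key3 ε hε
  have key : G * r ≤ N * (A * (-u' r)) := by
    have h1 : G * r ^ N / N ≤ r ^ (N - 1) * |u' r| ^ (p - 1) := by
      have := hhr
      simp only [hhdef] at this
      linarith
    have hrN : r ^ N = r ^ (N - 1) * r := by
      rw [← Real.rpow_add_one hr0.ne' (N - 1)]
      congr 1; ring
    rw [hrN, abs_of_neg (hu'neg r hrI), hV12, div_le_iff₀ hN0] at h1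
    have h2 : r ^ (N - 1) * (G * r) ≤ r ^ (N - 1) * (N * (A * (-u' r))) := by nlinarith [h1]
    exact le_of_mul_le_mul_left h2 hR
  -- Step 3: conclusion
  have hGr0 : 0 ≤ G * r := mul_nonneg hG0 hr0.le
  have hNX : 0 ≤ N * (A * (-u' r)) := by positivity
  have h2N2 : 0 ≤ (2 * N - 2) * (A * (-u' r)) := by
    have : (0:ℝ) ≤ 2 * N - 2 := by linarith
    positivity
  have habs0 : |u'' r * ((p - 1) * A * r)| ≤ (2 * N - 1) * (A * (-u' r)) := by
    rw [abs_le]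
    constructor <;> nlinarith [geqr, key, hGr0, hNX, h2N2]
  have habs : |u'' r| * ((p - 1) * r) * A ≤ (2 * N - 1) * (-u' r) * A := by
    have e1 : |u'' r| * ((p - 1) * r) * A = |u'' r * ((p - 1) * A * r)| := by
      rw [abs_mul, abs_of_pos (show (0:ℝ) < (p - 1) * A * r by positivity)]; ring
    rw [e1]
    calc |u'' r * ((p - 1) * A * r)| ≤ (2 * N - 1) * (A * (-u' r)) := habs0
      _ = (2 * N - 1) * (-u' r) * A := by ring
  have hfin : |u'' r| * ((p - 1) * r) ≤ (2 * N - 1) * (-u' r) :=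
    le_of_mul_le_mul_right habs hApos
  rw [abs_of_neg (hu'neg r hrI),
    show (2 * N - 1) / (p - 1) * (-u' r) / r = ((2 * N - 1) * (-u' r)) / ((p - 1) * r) from by
      rw [div_mul_eq_mul_div, div_div],
    le_div_iff₀ (by positivity)]
  exact hfin
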